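/- Boundedness of the cubic interpolation operators. For every cell-centered grid function ω, ‖T_x ω‖ ≤ (5/4)·‖ω‖ and ‖T_y ω‖ ≤ (5/4)·‖ω‖. -/

import Mathlib

open Finset

/-- A periodic grid function on the `Nx × Ny` staggered grid (periodicity is
automatic in the `ZMod` indexing).  The same index set represents
cell-centered, x-face and y-face values. -/
abbrev GridFn (Nx Ny : ℕ) := ZMod Nx × ZMod Ny → ℝ

variable {Nx Ny : ℕ}

/-- Discrete `L²` inner product `(ω, σ) = ∑ᵢⱼ hx·hy·ωᵢⱼ·σᵢⱼ`. -/
noncomputable def gip [NeZero Nx] [NeZero Ny] (hx hy : ℝ) (ω σ : GridFn Nx Ny) : ℝ :=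
  ∑ p : ZMod Nx × ZMod Ny, hx * hy * ω p * σ p

/-- Discrete `L²` norm. -/
noncomputable def gnorm [NeZero Nx] [NeZero Ny] (hx hy : ℝ) (ω : GridFn Nx Ny) : ℝ :=
  Real.sqrt (gip hx hy ω ω)

/-- `δ_x` mapping cell-centered functions to x-face functions. -/
noncomputable def dxc (hx : ℝ) (ω : GridFn Nx Ny) : GridFn Nx Ny :=
  fun p => (ω (p.1 + 1, p.2) - ω p) / hx

/-- `δ_x` mapping x-face functions to cell-centered functions. -/
noncomputable def dxf (hx : ℝ) (ν : GridFn Nx Ny) : GridFn Nx Ny :=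
  fun p => (ν p - ν (p.1 - 1, p.2)) / hx

/-- `δ_y` mapping cell-centered functions to y-face functions. -/
noncomputable def dyc (hy : ℝ) (ω : GridFn Nx Ny) : GridFn Nx Ny :=
  fun p => (ω (p.1, p.2 + 1) - ω p) / hy

/-- `δ_y` mapping y-face functions to cell-centered functions. -/
noncomputable def dyf (hy : ℝ) (ν : GridFn Nx Ny) : GridFn Nx Ny :=
  fun p => (ν p - ν (p.1, p.2 - 1)) / hy

/-- Second difference `δ_x²`. -/
noncomputable def dxx (hx : ℝ) (ω : GridFn Nx Ny) : GridFn Nx Ny :=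
  fun p => (ω (p.1 + 1, p.2) - 2 * ω p + ω (p.1 - 1, p.2)) / hx ^ 2

/-- Second difference `δ_y²`. -/
noncomputable def dyy (hy : ℝ) (ω : GridFn Nx Ny) : GridFn Nx Ny :=
  fun p => (ω (p.1, p.2 + 1) - 2 * ω p + ω (p.1, p.2 - 1)) / hy ^ 2

/-- Compact operator `L_x = Id + (hx²/24)·δ_x²`. -/
noncomputable def opLx (hx : ℝ) (ω : GridFn Nx Ny) : GridFn Nx Ny :=
  fun p => ω p + hx ^ 2 / 24 * dxx hx ω p

/-- Compact operator `L_y = Id + (hy²/24)·δ_y²`. -/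
noncomputable def opLy (hy : ℝ) (ω : GridFn Nx Ny) : GridFn Nx Ny :=
  fun p => ω p + hy ^ 2 / 24 * dyy hy ω p

/-- Compact operator `ℒ = L_x ∘ L_y`. -/
noncomputable def opLL (hx hy : ℝ) (ω : GridFn Nx Ny) : GridFn Nx Ny :=
  opLx hx (opLy hy ω)

/-- Cubic interpolation operator `T_x` (cell-centered to x-face). -/
noncomputable def Tx (ω : GridFn Nx Ny) : GridFn Nx Ny :=
  fun p => (-ω (p.1 - 1, p.2) + 9 * ω p + 9 * ω (p.1 + 1, p.2) - ω (p.1 + 2, p.2)) / 16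

/-- Cubic interpolation operator `T_y` (cell-centered to y-face). -/
noncomputable def Ty (ω : GridFn Nx Ny) : GridFn Nx Ny :=
  fun p => (-ω (p.1, p.2 - 1) + 9 * ω p + 9 * ω (p.1, p.2 + 1) - ω (p.1, p.2 + 2)) / 16

/-- **Lemma 3.4 (boundedness of the cubic interpolation operators).**
`‖T_x ω‖ ≤ (5/4)·‖ω‖` and `‖T_y ω‖ ≤ (5/4)·‖ω‖`. -/
noncomputable def toE [NeZero Nx] [NeZero Ny] (ω : GridFn Nx Ny) : EuclideanSpace ℝ (ZMod Nx × ZMod Ny) :=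
  (WithLp.equiv 2 _).symm ω

lemma toE_shift [NeZero Nx] [NeZero Ny] (a : ZMod Nx × ZMod Ny) (ω : GridFn Nx Ny) :
    ‖toE (fun p => ω (p + a))‖ = ‖toE ω‖ := by
  simp only [toE, EuclideanSpace.norm_eq, WithLp.equiv_symm_apply, PiLp.toLp_apply, WithLp.ofLp_toLp]
  congr 1
  exact Equiv.sum_comp (Equiv.addRight a) (fun p => ‖ω p‖ ^ 2)

lemma gnorm_eq [NeZero Nx] [NeZero Ny] (hx hy : ℝ) (hhx : 0 ≤ hx) (hhy : 0 ≤ hy)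
    (ω : GridFn Nx Ny) :
    gnorm hx hy ω = Real.sqrt (hx * hy) * ‖toE ω‖ := by
  have h1 : ∑ p : ZMod Nx × ZMod Ny, hx * hy * ω p * ω p
      = (hx * hy) * ∑ p : ZMod Nx × ZMod Ny, ‖ω p‖ ^ 2 := by
    rw [Finset.mul_sum]
    exact Finset.sum_congr rfl fun p _ => by
      rw [Real.norm_eq_abs, sq_abs]; ring
  rw [gnorm, gip, h1, Real.sqrt_mul (by positivity), toE,
    EuclideanSpace.norm_eq]
  simp only [WithLp.equiv_symm_apply, PiLp.toLp_apply, WithLp.ofLp_toLp]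


lemma toE_bound [NeZero Nx] [NeZero Ny] (ω ν : GridFn Nx Ny) (a b c : ZMod Nx × ZMod Ny)
    (h : toE ν = (-(1/16 : ℝ)) • toE (fun p => ω (p + a)) + (9/16 : ℝ) • toE ω
        + (9/16 : ℝ) • toE (fun p => ω (p + b))
        + (-(1/16 : ℝ)) • toE (fun p => ω (p + c))) :
    ‖toE ν‖ ≤ 5 / 4 * ‖toE ω‖ := by
  rw [h]
  calc ‖_‖ ≤ ‖(-(1/16 : ℝ)) • toE (fun p => ω (p + a)) + (9/16 : ℝ) • toE ω
        + (9/16 : ℝ) • toE (fun p => ω (p + b))‖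
        + ‖(-(1/16 : ℝ)) • toE (fun p => ω (p + c))‖ := norm_add_le _ _
    _ ≤ (‖(-(1/16 : ℝ)) • toE (fun p => ω (p + a)) + (9/16 : ℝ) • toE ω‖
        + ‖(9/16 : ℝ) • toE (fun p => ω (p + b))‖)
        + ‖(-(1/16 : ℝ)) • toE (fun p => ω (p + c))‖ := by
          gcongr; exact norm_add_le _ _
    _ ≤ ((‖(-(1/16 : ℝ)) • toE (fun p => ω (p + a))‖ + ‖(9/16 : ℝ) • toE ω‖)
        + ‖(9/16 : ℝ) • toE (fun p => ω (p + b))‖)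
        + ‖(-(1/16 : ℝ)) • toE (fun p => ω (p + c))‖ := by
          gcongr; exact norm_add_le _ _
    _ = 5 / 4 * ‖toE ω‖ := by
          simp only [norm_smul, Real.norm_eq_abs, toE_shift]
          rw [show |(-(1/16 : ℝ))| = 1/16 by norm_num,
            show |(9/16 : ℝ)| = 9/16 by norm_num]
          ring

theorem interp_op_bounds [NeZero Nx] [NeZero Ny]
    (hx hy : ℝ) (hhx : 0 < hx) (hhy : 0 < hy) (ω : GridFn Nx Ny) :
    gnorm hx hy (Tx ω) ≤ 5 / 4 * gnorm hx hy ω ∧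
    gnorm hx hy (Ty ω) ≤ 5 / 4 * gnorm hx hy ω := by
  have hs : (0 : ℝ) ≤ Real.sqrt (hx * hy) := Real.sqrt_nonneg _
  have hTx : toE (Tx ω)
      = (-(1/16 : ℝ)) • toE (fun p => ω (p + (-1, 0))) + (9/16 : ℝ) • toE ω
        + (9/16 : ℝ) • toE (fun p => ω (p + (1, 0)))
        + (-(1/16 : ℝ)) • toE (fun p => ω (p + (2, 0))) := by
    ext p
    simp only [toE, WithLp.equiv_symm_apply, PiLp.toLp_apply, WithLp.ofLp_toLp, PiLp.add_apply, PiLp.smul_apply,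
      smul_eq_mul, Tx, Prod.mk_add_mk, Prod.fst_add, Prod.snd_add]
    have e1 : p + ((-1 : ZMod Nx), (0 : ZMod Ny)) = (p.1 - 1, p.2) := by
      ext <;> simp [sub_eq_add_neg]
    have e2 : p + ((1 : ZMod Nx), (0 : ZMod Ny)) = (p.1 + 1, p.2) := by
      ext <;> simp
    have e3 : p + ((2 : ZMod Nx), (0 : ZMod Ny)) = (p.1 + 2, p.2) := by
      ext <;> simp
    rw [e1, e2, e3]; ring
  have hTy : toE (Ty ω)
      = (-(1/16 : ℝ)) • toE (fun p => ω (p + (0, -1))) + (9/16 : ℝ) • toE ω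
        + (9/16 : ℝ) • toE (fun p => ω (p + (0, 1)))
        + (-(1/16 : ℝ)) • toE (fun p => ω (p + (0, 2))) := by
    ext p
    simp only [toE, WithLp.equiv_symm_apply, PiLp.toLp_apply, WithLp.ofLp_toLp, PiLp.add_apply, PiLp.smul_apply,
      smul_eq_mul, Ty, Prod.mk_add_mk, Prod.fst_add, Prod.snd_add]
    have e1 : p + ((0 : ZMod Nx), (-1 : ZMod Ny)) = (p.1, p.2 - 1) := by
      ext <;> simp [sub_eq_add_neg]
    have e2 : p + ((0 : ZMod Nx), (1 : ZMod Ny)) = (p.1, p.2 + 1) := by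
      ext <;> simp
    have e3 : p + ((0 : ZMod Nx), (2 : ZMod Ny)) = (p.1, p.2 + 2) := by
      ext <;> simp
    rw [e1, e2, e3]; ring
  constructor
  · rw [gnorm_eq hx hy hhx.le hhy.le, gnorm_eq hx hy hhx.le hhy.le,
      mul_comm (5/4 : ℝ), mul_assoc]
    exact mul_le_mul_of_nonneg_left
      (by rw [mul_comm]; exact toE_bound ω (Tx ω) _ _ _ hTx) hs
  · rw [gnorm_eq hx hy hhx.le hhy.le, gnorm_eq hx hy hhx.le hhy.le,
      mul_comm (5/4 : ℝ), mul_assoc]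
    exact mul_le_mul_of_nonneg_left
      (by rw [mul_comm]; exact toE_bound ω (Ty ω) _ _ _ hTy) hs
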